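/- Let α be a real number with 0 ≤ α < 2/3 and let n ≥ 25 be an integer. Then λ_α(K_3 ∨ (K_{n−6} ∪ 3K_1)) < n − 2. -/

import Mathlib

open SimpleGraph

/-- The `Aα`-matrix of a finite simple graph: `Aα(G) = α·D(G) + (1-α)·A(G)`. -/
noncomputable def aAlphaMatrix {V : Type*} [Finite V] (α : ℝ) (G : SimpleGraph V) :
    Matrix V V ℝ :=
  letI := Fintype.ofFinite V
  letI := Classical.decEq V
  letI : DecidableRel G.Adj := Classical.decRel _
  α • Matrix.diagonal (fun v => (G.degree v : ℝ)) + (1 - α) • (G.adjMatrix ℝ)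

/-- The `Aα`-spectral radius: the largest eigenvalue of `Aα(G)` (the supremum of its real
spectrum; all eigenvalues of this symmetric matrix are real). -/
noncomputable def lambdaAlpha {V : Type*} [Finite V] (α : ℝ) (G : SimpleGraph V) : ℝ :=
  letI := Fintype.ofFinite V
  letI := Classical.decEq V
  sSup (spectrum ℝ (aAlphaMatrix α G))

/-- The join `G ∨ H` of two graphs on disjoint vertex sets. -/
def graphJoin {V W : Type*} (G : SimpleGraph V) (H : SimpleGraph W) : SimpleGraph (V ⊕ W) where
  Adj x y :=
    match x, y with
    | Sum.inl a, Sum.inl b => G.Adj a b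
    | Sum.inr a, Sum.inr b => H.Adj a b
    | Sum.inl _, Sum.inr _ => True
    | Sum.inr _, Sum.inl _ => True
  symm := ⟨by
    rintro (a | a) (b | b) h
    · exact G.adj_symm h
    · trivial
    · trivial
    · exact H.adj_symm h⟩
  loopless := ⟨by
    rintro (a | a) h
    · exact G.irrefl h
    · exact H.irrefl h⟩

/-- `G` has an `H`-factor where `H` consists of the paths `P_k` for `k ∈ ks`: a spanning
subgraph all of whose connected components are paths `P_k` with `k ∈ ks`. -/
def HasPathFactor {V : Type*} (G : SimpleGraph V) (ks : Set ℕ) : Prop :=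
  ∃ F : SimpleGraph V, F ≤ G ∧
    ∀ c : F.ConnectedComponent, ∃ k ∈ ks, Nonempty ((F.induce c.supp) ≃g pathGraph k)

/-- `K_1 ∨ (K_{n-2} ∪ K_1)`. -/
def specialGraph (n : ℕ) : SimpleGraph (Fin 1 ⊕ (Fin (n - 2) ⊕ Fin 1)) :=
  graphJoin (⊤ : SimpleGraph (Fin 1))
    ((⊤ : SimpleGraph (Fin (n - 2))) ⊕g (⊤ : SimpleGraph (Fin 1)))

/- ### Auxiliary lemmas -/

lemma graphJoin_adj_inl_inl {V W : Type*} {G : SimpleGraph V} {H : SimpleGraph W} {a b : V} :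
    (graphJoin G H).Adj (Sum.inl a) (Sum.inl b) ↔ G.Adj a b := Iff.rfl

lemma graphJoin_adj_inl_inr {V W : Type*} {G : SimpleGraph V} {H : SimpleGraph W} {a : V} {b : W} :
    (graphJoin G H).Adj (Sum.inl a) (Sum.inr b) := trivial

lemma graphJoin_adj_inr_inl {V W : Type*} {G : SimpleGraph V} {H : SimpleGraph W} {a : V} {b : W} :
    (graphJoin G H).Adj (Sum.inr b) (Sum.inl a) := trivial

lemma graphJoin_adj_inr_inr {V W : Type*} {G : SimpleGraph V} {H : SimpleGraph W} {a b : W} :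
    (graphJoin G H).Adj (Sum.inr a) (Sum.inr b) ↔ H.Adj a b := Iff.rfl

lemma sum_ite_ne {k : ℕ} (a : Fin k) (c : ℝ) :
    (∑ b : Fin k, if a ≠ b then c else 0) = (k : ℝ) * c - c := by
  have h : ∀ b : Fin k, (if a ≠ b then c else 0) = c - (if a = b then c else 0) := by
    intro b; by_cases h : a = b <;> simp [h]
  simp_rw [h]
  rw [Finset.sum_sub_distrib, Finset.sum_const, Finset.sum_ite_eq]
  simp [Finset.card_univ, mul_comm]

lemma degree_cast_eq {V : Type*} [Fintype V] (G : SimpleGraph V) [DecidableRel G.Adj] (v : V)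
    (i : Fintype (G.neighborSet v)) :
    ((@SimpleGraph.degree V G v i : ℕ) : ℝ) = ∑ u, if G.Adj v u then (1 : ℝ) else 0 := by
  classical
  rw [Subsingleton.elim i (SimpleGraph.neighborSetFintype G v)]
  rw [Finset.sum_boole]
  norm_cast
  rw [← SimpleGraph.neighborFinset_eq_filter]
  rfl

/-- Weighted Gershgorin-type bound on the supremum of the real spectrum. -/
lemma rowBound {V : Type*} [Fintype V] [DecidableEq V] (M : Matrix V V ℝ)
    (hM : ∀ i j, 0 ≤ M i j) (w : V → ℝ) (hw : ∀ v, 0 < w v) (c : ℝ) (hc : 0 ≤ c)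
    (hrow : ∀ v, ∑ u, M v u * w u ≤ c * w v) :
    sSup (spectrum ℝ M) ≤ c := by
  refine Real.sSup_le ?_ hc
  intro μ hμ
  rw [← AlgEquiv.spectrum_eq (Matrix.toLinAlgEquiv' (n := V) (R := ℝ)) M] at hμ
  have hev : Module.End.HasEigenvalue (Matrix.toLinAlgEquiv' M) μ :=
    Module.End.hasEigenvalue_iff_mem_spectrum.mpr hμ
  obtain ⟨x, hx⟩ := hev.exists_hasEigenvector
  have hxne : x ≠ 0 := hx.right
  have hxeq : M.mulVec x = μ • x := by
    have h := hx.apply_eq_smul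
    rwa [Matrix.toLinAlgEquiv'_apply] at h
  have hne : Nonempty V := by
    by_contra h
    exact hxne (funext fun v => absurd ⟨v⟩ h)
  obtain ⟨v, -, hvmax⟩ := Finset.exists_max_image Finset.univ (fun v => |x v| / w v)
    Finset.univ_nonempty
  set m := |x v| / w v with hm
  have hmpos : 0 < m := by
    obtain ⟨u, hu⟩ := Function.ne_iff.mp hxne
    have h1 : 0 < |x u| / w u := div_pos (abs_pos.mpr hu) (hw u)
    exact lt_of_lt_of_le h1 (hvmax u (Finset.mem_univ u))
  have hxv : |x v| = w v * m := by
    rw [hm]; field_simp [(hw v).ne']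
  have hxle : ∀ u, |x u| ≤ w u * m := fun u => by
    have h1 := hvmax u (Finset.mem_univ u)
    calc |x u| = (|x u| / w u) * w u := by field_simp [(hw u).ne']
    _ ≤ m * w u := mul_le_mul_of_nonneg_right h1 (hw u).le
    _ = w u * m := mul_comm _ _
  rcases le_or_gt μ 0 with hμ0 | hμ0
  · exact hμ0.trans hc
  · have key : μ * (w v * m) ≤ (c * w v) * m := by
      calc μ * (w v * m) = |μ| * |x v| := by rw [hxv, abs_of_pos hμ0]
      _ = |μ * x v| := (abs_mul _ _).symm
      _ = |∑ u, M v u * x u| := by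
          have h2 : (M.mulVec x) v = μ * x v := by rw [hxeq]; rfl
          rw [← h2]; rfl
      _ ≤ ∑ u, |M v u * x u| := Finset.abs_sum_le_sum_abs _ _
      _ = ∑ u, M v u * |x u| := by
          refine Finset.sum_congr rfl fun u _ => ?_
          rw [abs_mul, abs_of_nonneg (hM v u)]
      _ ≤ ∑ u, M v u * (w u * m) := by
          refine Finset.sum_le_sum fun u _ => mul_le_mul_of_nonneg_left (hxle u) (hM v u)
      _ = (∑ u, M v u * w u) * m := by simp_rw [← mul_assoc]; rw [← Finset.sum_mul]
      _ ≤ (c * w v) * m := mul_le_mul_of_nonneg_right (hrow v) hmpos.le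
    have h3 : μ * (w v * m) ≤ c * (w v * m) := by linarith [key]
    exact le_of_mul_le_mul_right (by linarith [h3]) (mul_pos (hw v) hmpos)

lemma mainAux (α : ℝ) (hα0 : 0 ≤ α) (hα1 : α ≤ 2 / 3) (m : ℕ) (N : ℝ)
    (hm : (m : ℝ) = N - 6) (hN : 25 ≤ N) :
    lambdaAlpha α (graphJoin (⊤ : SimpleGraph (Fin 3))
      ((⊤ : SimpleGraph (Fin m)) ⊕g (⊥ : SimpleGraph (Fin 3)))) ≤ N - 5 / 2 := by
  classical
  set G := graphJoin (⊤ : SimpleGraph (Fin 3))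
      ((⊤ : SimpleGraph (Fin m)) ⊕g (⊥ : SimpleGraph (Fin 3))) with hGdef
  let w : (Fin 3 ⊕ (Fin m ⊕ Fin 3)) → ℝ :=
    Sum.elim (fun _ => 1) (Sum.elim (fun _ => 7 / 10) (fun _ => 1 / 6))
  let D : (Fin 3 ⊕ (Fin m ⊕ Fin 3)) → ℝ :=
    Sum.elim (fun _ => N - 1) (Sum.elim (fun _ => N - 4) (fun _ => 3))
  -- neighbor sums
  have hsumL : ∀ (a : Fin 3) (f : (Fin 3 ⊕ (Fin m ⊕ Fin 3)) → ℝ),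
      (∑ u, if G.Adj (Sum.inl a) u then f u else 0) =
        (∑ b : Fin 3, if a ≠ b then f (Sum.inl b) else 0) +
          ((∑ x : Fin m, f (Sum.inr (Sum.inl x))) + (∑ y : Fin 3, f (Sum.inr (Sum.inr y)))) := by
    intro a f
    rw [Fintype.sum_sum_type, Fintype.sum_sum_type]
    congr 1
    · refine Finset.sum_congr rfl fun b _ => ?_
      simp [hGdef, graphJoin_adj_inl_inl]
    · congr 1 <;> refine Finset.sum_congr rfl fun x _ => ?_ <;>
        simp [hGdef, graphJoin_adj_inl_inr]
  have hsumM : ∀ (b : Fin m) (f : (Fin 3 ⊕ (Fin m ⊕ Fin 3)) → ℝ),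
      (∑ u, if G.Adj (Sum.inr (Sum.inl b)) u then f u else 0) =
        (∑ a : Fin 3, f (Sum.inl a)) +
          ((∑ x : Fin m, if b ≠ x then f (Sum.inr (Sum.inl x)) else 0) + 0) := by
    intro b f
    rw [Fintype.sum_sum_type, Fintype.sum_sum_type]
    congr 1
    · refine Finset.sum_congr rfl fun a _ => ?_
      simp [hGdef, graphJoin_adj_inr_inl]
    · congr 1
      · refine Finset.sum_congr rfl fun x _ => ?_
        simp [hGdef, graphJoin_adj_inr_inr]
      · refine Finset.sum_eq_zero fun y _ => ?_
        simp [hGdef, graphJoin_adj_inr_inr]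
  have hsumR : ∀ (c : Fin 3) (f : (Fin 3 ⊕ (Fin m ⊕ Fin 3)) → ℝ),
      (∑ u, if G.Adj (Sum.inr (Sum.inr c)) u then f u else 0) =
        (∑ a : Fin 3, f (Sum.inl a)) + (0 + 0) := by
    intro c f
    rw [Fintype.sum_sum_type, Fintype.sum_sum_type]
    congr 1
    · refine Finset.sum_congr rfl fun a _ => ?_
      simp [hGdef, graphJoin_adj_inr_inl]
    · congr 1
      · refine Finset.sum_eq_zero fun x _ => ?_
        simp [hGdef, graphJoin_adj_inr_inr]
      · refine Finset.sum_eq_zero fun y _ => ?_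
        simp [hGdef, graphJoin_adj_inr_inr]
  -- degrees
  have hdeg : ∀ (v : Fin 3 ⊕ (Fin m ⊕ Fin 3)) (i : Fintype (G.neighborSet v)),
      ((@SimpleGraph.degree _ G v i : ℕ) : ℝ) = D v := by
    intro v i
    rw [degree_cast_eq]
    rcases v with a | b | c
    · rw [hsumL a (fun _ => 1), sum_ite_ne]
      simp only [D, Sum.elim_inl, Finset.sum_const, Finset.card_univ, Fintype.card_fin,
        nsmul_eq_mul, mul_one]
      rw [hm]; ring
    · rw [hsumM b (fun _ => 1), sum_ite_ne]
      simp only [D, Sum.elim_inl, Sum.elim_inr, Finset.sum_const, Finset.card_univ,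
        Fintype.card_fin, nsmul_eq_mul, mul_one]
      rw [hm]; ring
    · rw [hsumR c (fun _ => 1)]
      simp only [D, Sum.elim_inr, Finset.sum_const, Finset.card_univ, Fintype.card_fin,
        nsmul_eq_mul, mul_one]
      ring
  -- matrix entries
  have hent : ∀ v u, aAlphaMatrix α G v u =
      (if v = u then α * D v else 0) + (if G.Adj v u then (1 - α) else 0) := by
    intro v u
    unfold aAlphaMatrix
    simp only [Matrix.add_apply, Matrix.smul_apply, Matrix.diagonal_apply,
      SimpleGraph.adjMatrix_apply, smul_eq_mul]
    rw [hdeg v]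
    by_cases h : v = u <;> by_cases h2 : G.Adj v u <;> simp [h, h2] <;> ring
  have hD0 : ∀ v, 0 ≤ D v := by
    rintro (a | b | c) <;> simp [D] <;> linarith
  have hM : ∀ i j, 0 ≤ aAlphaMatrix α G i j := by
    intro i j
    rw [hent i j]
    have := mul_nonneg hα0 (hD0 i)
    split_ifs <;> nlinarith
  have hw : ∀ v, 0 < w v := by
    rintro (a | b | c) <;> norm_num [w]
  -- row bounds with the canonical instances
  have hrowC : ∀ v, (∑ u, aAlphaMatrix α G v u * w u) ≤ (N - 5 / 2) * w v := by
    intro v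
    have hterm : ∀ u, aAlphaMatrix α G v u * w u =
        (if v = u then α * D v * w u else 0) + (if G.Adj v u then (1 - α) * w u else 0) := by
      intro u
      rw [hent v u]
      by_cases h : v = u <;> by_cases h2 : G.Adj v u <;> simp [h, h2] <;> ring
    rw [Finset.sum_congr rfl (fun u _ => hterm u), Finset.sum_add_distrib, Finset.sum_ite_eq]
    simp only [Finset.mem_univ, if_true]
    rcases v with a | b | c
    · rw [hsumL a (fun u => (1 - α) * w u)]
      have e1 : (∑ b : Fin 3, if a ≠ b then (1 - α) * w (Sum.inl b) else 0) =
          (3 : ℝ) * ((1 - α) * 1) - (1 - α) * 1 := by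
        have := sum_ite_ne a ((1 - α) * 1)
        simpa [w] using this
      rw [e1]
      simp only [w, D, Sum.elim_inl, Sum.elim_inr, Finset.sum_const, Finset.card_univ,
        Fintype.card_fin, nsmul_eq_mul]
      rw [hm]
      nlinarith [mul_nonneg (by linarith : (0:ℝ) ≤ 2 / 3 - α) (by linarith : (0:ℝ) ≤ N - 25)]
    · rw [hsumM b (fun u => (1 - α) * w u)]
      have e1 : (∑ x : Fin m, if b ≠ x then (1 - α) * w (Sum.inr (Sum.inl x)) else 0) =
          (m : ℝ) * ((1 - α) * (7 / 10)) - (1 - α) * (7 / 10) := by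
        have := sum_ite_ne b ((1 - α) * (7 / 10))
        simpa [w] using this
      rw [e1]
      simp only [w, D, Sum.elim_inl, Sum.elim_inr, Finset.sum_const, Finset.card_univ,
        Fintype.card_fin, nsmul_eq_mul]
      rw [hm]
      nlinarith
    · rw [hsumR c (fun u => (1 - α) * w u)]
      simp only [w, D, Sum.elim_inl, Sum.elim_inr, Finset.sum_const, Finset.card_univ,
        Fintype.card_fin, nsmul_eq_mul]
      nlinarith
  have hu : @Finset.univ _ (Fintype.ofFinite (Fin 3 ⊕ (Fin m ⊕ Fin 3))) = Finset.univ := by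
    ext x; simp
  have hrow : ∀ v, (∑ u ∈ @Finset.univ _ (Fintype.ofFinite (Fin 3 ⊕ (Fin m ⊕ Fin 3))),
      aAlphaMatrix α G v u * w u) ≤ (N - 5 / 2) * w v := by
    intro v; rw [hu]; exact hrowC v
  exact @rowBound _ (Fintype.ofFinite _) (Classical.decEq _) (aAlphaMatrix α G) hM w hw
    (N - 5 / 2) (by linarith) hrow

/-- For `0 ≤ α < 2/3` and every integer `n ≥ 25`, `λ_α(K_3 ∨ (K_{n−6} ∪ 3K_1)) < n − 2`. -/
theorem lambdaAlpha_K3_join_lt (α : ℝ) (hα0 : 0 ≤ α) (hα1 : α < 2 / 3)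
    (n : ℕ) (hn : 25 ≤ n) :
    lambdaAlpha α (graphJoin (⊤ : SimpleGraph (Fin 3))
        ((⊤ : SimpleGraph (Fin (n - 6))) ⊕g (⊥ : SimpleGraph (Fin 3)))) <
      (n : ℝ) - 2 := by
  have h6 : ((n - 6 : ℕ) : ℝ) = (n : ℝ) - 6 := by
    have h : (6 : ℕ) ≤ n := by omega
    have h2 := Nat.cast_sub (R := ℝ) h
    simpa using h2
  have hN : (25 : ℝ) ≤ (n : ℝ) := by exact_mod_cast hn
  have h := mainAux α hα0 hα1.le (n - 6) (n : ℝ) h6 hN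
  linarith
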